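/- arXiv:1110.0777 — 2 statements merged into one kernel-verified Lean document; each statement's English description precedes it below -/
import Mathlib

section
/- For the standard horocycle parametrization: if g ∈ SL(2,ℝ) has Iwasawa decomposition g = h(x)a(y)k(θ) with sin θ ≠ 0, set R = y/(sin θ)², W = cot θ, and α = x − yW. Then for all real t with t ≠ −W, g·h(t + W) = h(α − R t/(t²+1))·a(R/(t²+1))·k(−arccot t) as elements of SL(2,ℝ) up to sign (i.e., in PSL(2,ℝ)). -/
open Matrix Real

/-- `h(x) = [[1, x], [0, 1]]`. -/
noncomputable def hMat (x : ℝ) : Matrix (Fin 2) (Fin 2) ℝ := !![1, x; 0, 1]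

/-- `a(y) = diag(y^{1/2}, y^{-1/2})`. -/
noncomputable def aMat (y : ℝ) : Matrix (Fin 2) (Fin 2) ℝ :=
  !![Real.sqrt y, 0; 0, (Real.sqrt y)⁻¹]

/-- `k(θ) = [[cos θ, sin θ], [-sin θ, cos θ]]`. -/
noncomputable def kMat (θ : ℝ) : Matrix (Fin 2) (Fin 2) ℝ :=
  !![Real.cos θ, Real.sin θ; -Real.sin θ, Real.cos θ]

set_option maxHeartbeats 1600000 in
/-- **Horocycle flow parametrization.** If `g = h(x)a(y)k(θ)` with `y > 0` and
`sin θ ≠ 0`, set `R = y/(sin θ)²`, `W = cot θ`, `α = x − yW`. Then for `t ≠ −W`, up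
to sign (i.e. in `PSL(2,ℝ)`),
`g·h(t+W) = h(α − Rt/(t²+1)) · a(R/(t²+1)) · k(−arccot t)`,
where `−arccot t = arctan t − π/2`. -/
theorem horocycle_flow_parametrization (g : Matrix (Fin 2) (Fin 2) ℝ)
    (x y θ : ℝ) (hy : 0 < y) (hθ : Real.sin θ ≠ 0)
    (hg : g = hMat x * aMat y * kMat θ)
    (R W α : ℝ) (hR : R = y / Real.sin θ ^ 2)
    (hW : W = Real.cos θ / Real.sin θ) (hα : α = x - y * W)
    (t : ℝ) (ht : t ≠ -W) :
    g * hMat (t + W) =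
        hMat (α - R * t / (t ^ 2 + 1)) * aMat (R / (t ^ 2 + 1)) *
          kMat (Real.arctan t - Real.pi / 2) ∨
    g * hMat (t + W) =
        -(hMat (α - R * t / (t ^ 2 + 1)) * aMat (R / (t ^ 2 + 1)) *
          kMat (Real.arctan t - Real.pi / 2)) := by
  subst hg hR hW hα
  set s := Real.sin θ with hsdef
  set c := Real.cos θ with hcdef
  have hpy : c ^ 2 + s ^ 2 = 1 := Real.cos_sq_add_sin_sq θ
  set sy := Real.sqrt y with hsy
  have hsy0 : 0 < sy := Real.sqrt_pos.mpr hy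
  have hsy2 : sy ^ 2 = y := Real.sq_sqrt hy.le
  have ht1 : (0:ℝ) < t ^ 2 + 1 := by positivity
  set u := Real.sqrt (t ^ 2 + 1) with hu
  have hu0 : 0 < u := Real.sqrt_pos.mpr ht1
  have hu2 : u ^ 2 = t ^ 2 + 1 := Real.sq_sqrt ht1.le
  have hcos : Real.cos (Real.arctan t - π / 2) = t / u := by
    rw [← Real.cos_neg, neg_sub, Real.cos_pi_div_two_sub, Real.sin_arctan, hu, add_comm]
  have hsin : Real.sin (Real.arctan t - π / 2) = -(1 / u) := by
    rw [← neg_neg (Real.arctan t - π/2), Real.sin_neg, neg_sub, Real.sin_pi_div_two_sub,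
      Real.cos_arctan, hu, add_comm]
  have hv : Real.sqrt (y / s ^ 2 / (t ^ 2 + 1)) = sy / (|s| * u) := by
    rw [div_div, Real.sqrt_div hy.le, Real.sqrt_mul (sq_nonneg s), Real.sqrt_sq_eq_abs]
  have hy2 : y = sy ^ 2 := hsy2.symm
  have hu2' : t ^ 2 + 1 = u ^ 2 := hu2.symm
  rcases hθ.lt_or_gt with hs | hs
  · left
    ext i j
    fin_cases i <;> fin_cases j <;>
      simp [hMat, aMat, kMat, Matrix.mul_apply, Fin.sum_univ_two, hv, hcos, hsin,
        abs_of_neg hs] <;>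
      simp only [← hsdef, ← hcdef, ← hsy, hy2, hu2', Real.sqrt_sq hsy0.le] <;>
      field_simp <;>
      first
        | ring1
        | linear_combination sy^4*s^4*u^5 * hpy + sy^4*s^4*u^3 * hu2
        | linear_combination sy^2*u^2 * hpy + sy^2 * hu2
  · right
    ext i j
    fin_cases i <;> fin_cases j <;>
      simp [hMat, aMat, kMat, Matrix.mul_apply, Fin.sum_univ_two, hv, hcos, hsin,
        abs_of_pos hs] <;>
      simp only [← hsdef, ← hcdef, ← hsy, hy2, hu2', Real.sqrt_sq hsy0.le] <;>
      field_simp <;>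
      first
        | ring1
        | linear_combination sy^4*s^4*u^5 * hpy + sy^4*s^4*u^3 * hu2
        | linear_combination sy^2*u^2 * hpy + sy^2 * hu2
end

section
/- Let D ≥ 1 be real, N a positive integer with D ≤ N^{1/2 − ε} for some ε > 0, and let S = {(d,t,k) : 1 ≤ d ≤ D, 1 ≤ |t| ≤ D, 1 ≤ |k| ≤ N, gcd(k,N) ≤ B, d·k ≡ t (mod N)}. Then |S| ≤ C_ε · B · D² · N^{ε} for some constant C_ε (i.e., ∑_k c_k ≪ D² N^{ε} where c_k counts pairs (d,t) with dk ≡ t mod N). -/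
-- count of t in [-C,C] with d ∣ t + a
lemma count_dvd_le (d a C : ℤ) (hd : 0 < d) (hC : 0 ≤ C) :
    (((Finset.Icc (-C) C).filter (fun t => d ∣ t + a)).card : ℝ) ≤
      2 * (C : ℝ) / (d : ℝ) + 2 := by
  have hdR : (0:ℝ) < (d:ℝ) := by exact_mod_cast hd
  have key : ((Finset.Icc (-C) C).filter (fun t => d ∣ t + a)).card ≤
      (Finset.Icc ((a - C) / d) ((a + C) / d)).card := by
    apply Finset.card_le_card_of_injOn (fun t => (t + a) / d)
    · intro t ht
      simp only [Finset.coe_filter, Finset.coe_Icc, Set.mem_setOf_eq, Set.mem_Icc, Finset.mem_filter, Finset.mem_Icc] at ht ⊢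
      constructor
      · exact Int.ediv_le_ediv hd (by linarith [ht.1.1])
      · exact Int.ediv_le_ediv hd (by linarith [ht.1.2])
    · intro t ht t' ht' h
      simp only [Finset.coe_filter, Set.mem_setOf_eq, Finset.mem_Icc] at ht ht'
      have h1 : (t + a) / d * d = t + a := Int.ediv_mul_cancel ht.2
      have h2 : (t' + a) / d * d = t' + a := Int.ediv_mul_cancel ht'.2
      have h' : (t + a) / d = (t' + a) / d := by simpa using h
      rw [h'] at h1
      omega
  have hcard : (Finset.Icc ((a - C) / d) ((a + C) / d)).card =
      ((a + C) / d + 1 - (a - C) / d).toNat := Int.card_Icc _ _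
  have h3 : d * ((a + C) / d) ≤ a + C := by
    have := Int.emod_nonneg (a + C) (ne_of_gt hd)
    have := Int.mul_ediv_add_emod (a + C) d
    omega
  have h4 : a - C - d < d * ((a - C) / d) := by
    have := Int.emod_lt_of_pos (a - C) hd
    have := Int.mul_ediv_add_emod (a - C) d
    omega
  have h5 : d * ((a + C) / d + 1 - (a - C) / d) ≤ 2 * C + 2 * d := by nlinarith
  calc (((Finset.Icc (-C) C).filter (fun t => d ∣ t + a)).card : ℝ)
      ≤ ((((a + C) / d + 1 - (a - C) / d).toNat : ℤ) : ℝ) := by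
        rw [← hcard]; exact_mod_cast key
    _ ≤ 2 * (C : ℝ) / (d : ℝ) + 2 := by
        rw [Int.toNat_eq_max]
        rcases max_cases ((a + C) / d + 1 - (a - C) / d) 0 with ⟨h, _⟩ | ⟨h, _⟩ <;> rw [h]
        · rw [div_add' _ _ _ (ne_of_gt hdR), le_div_iff₀ hdR]
          have : ((d * ((a + C) / d + 1 - (a - C) / d) : ℤ) : ℝ) ≤ ((2 * C + 2 * d : ℤ) : ℝ) :=
            by exact_mod_cast h5
          push_cast at this ⊢
          nlinarith
        · push_cast
          positivity

-- harmonic sum over integer Icc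
lemma harmonic_int_le (C : ℤ) (hC : 1 ≤ C) :
    ∑ d ∈ Finset.Icc (1:ℤ) C, 1 / (d : ℝ) ≤ 1 + Real.log C := by
  have h1 : ∑ d ∈ Finset.Icc (1:ℤ) C, 1 / (d : ℝ)
      = ∑ d ∈ Finset.Icc 1 C.toNat, 1 / (d : ℝ) := by
    refine Finset.sum_nbij' (fun d => d.toNat) (fun n => (n : ℤ)) ?_ ?_ ?_ ?_ ?_
    · intro d hd; simp only [Finset.mem_Icc] at hd ⊢; omega
    · intro n hn; simp only [Finset.mem_Icc] at hn ⊢; omega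
    · intro d hd; simp only [Finset.mem_Icc] at hd; simp; omega
    · intro n hn; simp
    · intro d hd
      simp only [Finset.mem_Icc] at hd
      have hc : ((d.toNat : ℕ) : ℝ) = ((d : ℤ) : ℝ) := by
        exact_mod_cast Int.toNat_of_nonneg (by omega : (0:ℤ) ≤ d)
      simp [hc]
  rw [h1]
  have h2 : ∑ d ∈ Finset.Icc 1 C.toNat, 1 / (d : ℝ) = (harmonic C.toNat : ℝ) := by
    rw [harmonic_eq_sum_Icc]
    push_cast
    simp [one_div]
  rw [h2]
  have := harmonic_le_one_add_log C.toNat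
  have hcast : ((C.toNat : ℕ) : ℝ) = (C : ℝ) := by
    exact_mod_cast congrArg Int.cast (Int.toNat_of_nonneg (by omega) : (C.toNat : ℤ) = C)
  rw [hcast] at this
  exact this

set_option maxHeartbeats 1000000 in
/-- **Counting triples for the congruence `d·k ≡ t (mod N)`.** For each `ε > 0`
there is a constant `C_ε` such that for all `D ≥ 1`, `N ≥ 1` with `D ≤ N^{1/2−ε}`
and all `B`, the number of triples `(k, d, t)` with `1 ≤ d ≤ D`, `1 ≤ |t| ≤ D`,
`1 ≤ |k| ≤ N`, `gcd(k,N) ≤ B` and `d·k ≡ t (mod N)` is at most `C_ε·B·D²·N^ε`. -/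
theorem congruence_triple_count (ε : ℝ) (hε : 0 < ε) :
    ∃ C : ℝ, 0 < C ∧ ∀ (D : ℝ) (N B : ℕ), 1 ≤ D → 0 < N →
      D ≤ (N : ℝ) ^ ((1 : ℝ) / 2 - ε) →
      (((Finset.Icc (-(N : ℤ)) N ×ˢ
          (Finset.Icc (-⌈D⌉) ⌈D⌉ ×ˢ Finset.Icc (-⌈D⌉) ⌈D⌉)).filter
          (fun p : ℤ × ℤ × ℤ =>
            1 ≤ p.2.1 ∧ (p.2.1 : ℝ) ≤ D ∧
            1 ≤ |p.2.2| ∧ (|p.2.2| : ℝ) ≤ D ∧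
            1 ≤ |p.1| ∧ |p.1| ≤ (N : ℤ) ∧
            Int.gcd p.1 N ≤ B ∧
            (N : ℤ) ∣ p.2.1 * p.1 - p.2.2)).card : ℝ) ≤
        C * B * D ^ 2 * (N : ℝ) ^ ε := by
  refine ⟨108 + 36 / ε, by positivity, ?_⟩
  intro D N B hD hN hDN
  set T := ((Finset.Icc (-(N : ℤ)) N ×ˢ
          (Finset.Icc (-⌈D⌉) ⌈D⌉ ×ˢ Finset.Icc (-⌈D⌉) ⌈D⌉)).filter
          (fun p : ℤ × ℤ × ℤ =>
            1 ≤ p.2.1 ∧ (p.2.1 : ℝ) ≤ D ∧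
            1 ≤ |p.2.2| ∧ (|p.2.2| : ℝ) ≤ D ∧
            1 ≤ |p.1| ∧ |p.1| ≤ (N : ℤ) ∧
            Int.gcd p.1 N ≤ B ∧
            (N : ℤ) ∣ p.2.1 * p.1 - p.2.2)) with hT
  -- case B = 0 : the set is empty
  rcases Nat.eq_zero_or_pos B with hB | hB
  · have hTe : T = ∅ := by
      rw [Finset.filter_eq_empty_iff]
      rintro p hp ⟨-, -, -, -, -, -, hg, -⟩
      rw [hB, Nat.le_zero, Int.gcd_eq_zero_iff] at hg
      omega
    rw [hTe, hB]
    simp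
  -- main case
  set Cc : ℤ := ⌈D⌉ with hCc
  have hC1 : 1 ≤ Cc := by
    rw [hCc]; exact_mod_cast Int.le_ceil_iff.mpr (by norm_num; linarith)
  have hCle : (Cc : ℝ) ≤ 2 * D := by
    calc (Cc : ℝ) ≤ D + 1 := le_of_lt (Int.ceil_lt_add_one D)
    _ ≤ 2 * D := by linarith
  have hCpos : (0:ℝ) < (Cc:ℝ) := by exact_mod_cast hC1
  have hDge : D ≤ (Cc : ℝ) := Int.le_ceil D
  -- the target set of the injection
  set s : Finset (ℤ × ℤ) := Finset.Icc 1 Cc ×ˢ Finset.Icc (-(2*Cc)) (2*Cc) with hs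
  set u : Finset ℤ := Finset.Icc (-Cc) Cc with hu
  set T' : Finset ((ℤ × ℤ) × ℤ) :=
    (s ×ˢ u).filter (fun q => q.1.1 ∣ q.2 + q.1.2 * N) with hT'
  have step1 : T.card ≤ T'.card := by
    refine Finset.card_le_card_of_injOn
      (fun p : ℤ × ℤ × ℤ => ((p.2.1, (p.2.1 * p.1 - p.2.2) / (N:ℤ)), p.2.2)) ?_ ?_
    · intro p hp
      rw [Finset.mem_coe, Finset.mem_filter] at hp
      obtain ⟨hmem, hd1, hdD, ht1, htD, hk1, hkN, hgcd, hdvd⟩ := hp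
      have hmN : (p.2.1 * p.1 - p.2.2) / (N:ℤ) * N = p.2.1 * p.1 - p.2.2 :=
        Int.ediv_mul_cancel hdvd
      have hNpos : (0:ℤ) < (N:ℤ) := by exact_mod_cast hN
      have hdC : p.2.1 ≤ Cc := by
        have : (p.2.1 : ℝ) ≤ (Cc : ℝ) := le_trans hdD hDge
        exact_mod_cast this
      have htC : |p.2.2| ≤ Cc := by
        have : (|p.2.2| : ℝ) ≤ (Cc : ℝ) := le_trans htD hDge
        exact_mod_cast this
      have hmb : |(p.2.1 * p.1 - p.2.2) / (N:ℤ)| ≤ 2 * Cc := by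
        have h1 : |(p.2.1 * p.1 - p.2.2) / (N:ℤ)| * |(N:ℤ)| = |p.2.1 * p.1 - p.2.2| := by
          rw [← abs_mul, hmN]
        rw [abs_of_pos hNpos] at h1
        have h2 : |p.2.1 * p.1 - p.2.2| ≤ Cc * N + Cc := by
          calc |p.2.1 * p.1 - p.2.2| ≤ |p.2.1 * p.1| + |p.2.2| := abs_sub _ _
            _ = |p.2.1| * |p.1| + |p.2.2| := by rw [abs_mul]
            _ ≤ Cc * N + Cc := by
                have hda : |p.2.1| = p.2.1 := abs_of_pos (by omega)
                nlinarith [abs_nonneg p.1, htC, hkN, hda, hdC, hd1]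
        have h3 : Cc * N + Cc ≤ (2 * Cc) * N := by nlinarith
        have h4 := le_trans (h1 ▸ h2) h3
        exact le_of_mul_le_mul_right h4 hNpos
      obtain ⟨hm1, hm2⟩ := abs_le.mp hmb
      obtain ⟨ht1', ht2'⟩ := abs_le.mp htC
      simp only [hT', Finset.mem_coe, Finset.mem_filter, hs, hu, Finset.mem_product, Finset.mem_Icc]
      exact ⟨⟨⟨⟨hd1, hdC⟩, hm1, hm2⟩, ht1', ht2'⟩, ⟨p.1, by linarith [hmN]⟩⟩
    · intro p hp p' hp' hf
      rw [Finset.mem_coe, hT, Finset.mem_filter] at hp hp'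
      have hfm : ((p.2.1, (p.2.1 * p.1 - p.2.2) / (N:ℤ)), p.2.2)
          = ((p'.2.1, (p'.2.1 * p'.1 - p'.2.2) / (N:ℤ)), p'.2.2) := by simpa using hf
      have hd : p.2.1 = p'.2.1 := congrArg (fun q => q.1.1) hfm
      have hmm' : (p.2.1 * p.1 - p.2.2) / (N:ℤ) = (p'.2.1 * p'.1 - p'.2.2) / (N:ℤ) :=
        congrArg (fun q => q.1.2) hfm
      have ht : p.2.2 = p'.2.2 := congrArg (fun q => q.2) hfm
      have h1 : (p.2.1 * p.1 - p.2.2) / (N:ℤ) * N = p.2.1 * p.1 - p.2.2 :=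
        Int.ediv_mul_cancel hp.2.2.2.2.2.2.2.2
      have h2 : (p'.2.1 * p'.1 - p'.2.2) / (N:ℤ) * N = p'.2.1 * p'.1 - p'.2.2 :=
        Int.ediv_mul_cancel hp'.2.2.2.2.2.2.2.2
      rw [hmm'] at h1
      have hkk : p.2.1 * p.1 = p'.2.1 * p'.1 := by omega
      have hd1 : 1 ≤ p.2.1 := hp.2.1
      have hk : p.1 = p'.1 := by
        rw [hd] at hkk hd1
        exact mul_left_cancel₀ (by omega) hkk
      exact Prod.ext hk (Prod.ext hd ht)
  -- Step 2: count T' fiberwise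
  have step2 : (T'.card : ℝ) ≤ ∑ x ∈ s, (2 * (Cc:ℝ) / (x.1:ℝ) + 2) := by
    have e1 : T'.card = ∑ x ∈ s, (u.filter (fun t => x.1 ∣ t + x.2 * (N:ℤ))).card := by
      rw [hT', Finset.card_filter, Finset.sum_product]
      exact Finset.sum_congr rfl (fun x _ => (Finset.card_filter _ _).symm)
    rw [e1]
    push_cast
    apply Finset.sum_le_sum
    intro x hx
    rw [hs, Finset.mem_product, Finset.mem_Icc] at hx
    exact count_dvd_le x.1 (x.2 * N) Cc (by omega) (by omega)
  -- Step 3: the double sum factorizes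
  have step3 : ∑ x ∈ s, (2 * (Cc:ℝ) / (x.1:ℝ) + 2)
      = ∑ d ∈ Finset.Icc (1:ℤ) Cc, (4 * (Cc:ℝ) + 1) * (2 * (Cc:ℝ) / (d:ℝ) + 2) := by
    rw [hs, Finset.sum_product]
    apply Finset.sum_congr rfl
    intro d _
    show ∑ _y ∈ Finset.Icc (-(2*Cc)) (2*Cc), (2 * (Cc:ℝ) / (d:ℝ) + 2) = _
    rw [Finset.sum_const, nsmul_eq_mul]
    congr 1
    have h0 : ((Finset.Icc (-(2*Cc)) (2*Cc)).card : ℤ) = 4 * Cc + 1 := by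
      rw [Int.card_Icc]
      omega
    exact_mod_cast h0
  -- Step 4: harmonic bound
  have step4 : ∑ d ∈ Finset.Icc (1:ℤ) Cc, (2 * (Cc:ℝ) / (d:ℝ) + 2)
      ≤ 2 * (Cc:ℝ) * (1 + Real.log Cc) + 2 * (Cc:ℝ) := by
    rw [Finset.sum_add_distrib]
    have h1 : ∑ d ∈ Finset.Icc (1:ℤ) Cc, 2 * (Cc:ℝ) / (d:ℝ)
        = 2 * (Cc:ℝ) * ∑ d ∈ Finset.Icc (1:ℤ) Cc, 1 / (d:ℝ) := by
      rw [Finset.mul_sum]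
      exact Finset.sum_congr rfl (fun d _ => by rw [mul_one_div])
    have h2 : ∑ _d ∈ Finset.Icc (1:ℤ) Cc, (2:ℝ) ≤ 2 * (Cc:ℝ) := by
      rw [Finset.sum_const, nsmul_eq_mul]
      have h0 : ((Finset.Icc (1:ℤ) Cc).card : ℤ) = Cc := by rw [Int.card_Icc]; omega
      have h0' : ((Finset.Icc (1:ℤ) Cc).card : ℝ) = (Cc:ℝ) := by exact_mod_cast h0
      rw [h0']
      linarith
    have h3 := harmonic_int_le Cc hC1
    have h4 : 2 * (Cc:ℝ) * ∑ d ∈ Finset.Icc (1:ℤ) Cc, 1 / (d:ℝ)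
        ≤ 2 * (Cc:ℝ) * (1 + Real.log Cc) := by
      apply mul_le_mul_of_nonneg_left h3 (by positivity)
    linarith [h1 ▸ h4]
  -- Step 5: log estimates
  set X := (N:ℝ) ^ ε with hX
  set L := Real.log N with hL
  have hN1 : (1:ℝ) ≤ (N:ℝ) := by exact_mod_cast hN
  have hL0 : 0 ≤ L := Real.log_nonneg hN1
  have hX1 : (1:ℝ) ≤ X := by
    rw [hX]
    calc (1:ℝ) = (N:ℝ) ^ (0:ℝ) := (Real.rpow_zero _).symm
    _ ≤ (N:ℝ) ^ ε := Real.rpow_le_rpow_of_exponent_le hN1 hε.le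
  have hLX : L ≤ X / ε := Real.log_le_rpow_div (Nat.cast_nonneg N) hε
  have hlogD : Real.log D ≤ L := by
    calc Real.log D ≤ Real.log ((N:ℝ) ^ ((1:ℝ)/2 - ε)) :=
          Real.log_le_log (by linarith) hDN
    _ = ((1:ℝ)/2 - ε) * L := by rw [Real.log_rpow (by linarith)]
    _ ≤ L := by nlinarith
  have hlogC : Real.log Cc ≤ 1 + L := by
    calc Real.log Cc ≤ Real.log (2 * D) := Real.log_le_log hCpos hCle
    _ = Real.log 2 + Real.log D := Real.log_mul (by norm_num) (by linarith)
    _ ≤ 1 + L := by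
        have := Real.log_le_sub_one_of_pos (by norm_num : (0:ℝ) < 2)
        linarith
  -- Combine everything
  have hTT : (T.card : ℝ) ≤ (4 * (Cc:ℝ) + 1) * (2 * (Cc:ℝ) * (1 + Real.log Cc) + 2 * (Cc:ℝ)) := by
    have c1 : (T.card : ℝ) ≤ (T'.card : ℝ) := by exact_mod_cast step1
    have c2 : ∑ d ∈ Finset.Icc (1:ℤ) Cc, (4 * (Cc:ℝ) + 1) * (2 * (Cc:ℝ) / (d:ℝ) + 2)
        = (4 * (Cc:ℝ) + 1) * ∑ d ∈ Finset.Icc (1:ℤ) Cc, (2 * (Cc:ℝ) / (d:ℝ) + 2) := by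
      rw [Finset.mul_sum]
    have c3 : (4 * (Cc:ℝ) + 1) * ∑ d ∈ Finset.Icc (1:ℤ) Cc, (2 * (Cc:ℝ) / (d:ℝ) + 2)
        ≤ (4 * (Cc:ℝ) + 1) * (2 * (Cc:ℝ) * (1 + Real.log Cc) + 2 * (Cc:ℝ)) :=
      mul_le_mul_of_nonneg_left step4 (by positivity)
    calc (T.card : ℝ) ≤ (T'.card : ℝ) := c1
    _ ≤ ∑ x ∈ s, (2 * (Cc:ℝ) / (x.1:ℝ) + 2) := step2
    _ = _ := step3
    _ = _ := c2
    _ ≤ _ := c3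
  have hA : 4 * (Cc:ℝ) + 1 ≤ 9 * D := by linarith
  have hInner : 2 * (Cc:ℝ) * (1 + Real.log Cc) + 2 * (Cc:ℝ) ≤ 4 * D * (3 + L) := by
    have i1 : 2 * (Cc:ℝ) * (1 + Real.log Cc) ≤ 4 * D * (2 + L) := by
      apply mul_le_mul (by linarith) (by linarith) (by positivity)
      positivity
    have hlogCc0 : 0 ≤ Real.log Cc := Real.log_nonneg (by exact_mod_cast hC1)
    nlinarith
  have hfinal : (T.card : ℝ) ≤ (108 + 36 / ε) * D ^ 2 * X := by
    have m1 : (T.card : ℝ) ≤ 9 * D * (4 * D * (3 + L)) := by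
      have : (4 * (Cc:ℝ) + 1) * (2 * (Cc:ℝ) * (1 + Real.log Cc) + 2 * (Cc:ℝ))
          ≤ 9 * D * (4 * D * (3 + L)) := by
        apply mul_le_mul hA hInner (by positivity)
        positivity
      linarith
    have m2 : 9 * D * (4 * D * (3 + L)) = 36 * D ^ 2 * (3 + L) := by ring
    have m3 : 3 + L ≤ 3 * X + X / ε := by linarith
    have m4 : 36 * D ^ 2 * (3 + L) ≤ 36 * D ^ 2 * (3 * X + X / ε) :=
      mul_le_mul_of_nonneg_left m3 (by positivity)
    have m5 : 36 * D ^ 2 * (3 * X + X / ε) = (108 + 36 / ε) * D ^ 2 * X := by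
      field_simp
      ring
    linarith [m1, m2 ▸ m4]
  have hB1 : (1:ℝ) ≤ (B:ℝ) := by exact_mod_cast hB
  have hpos : (0:ℝ) ≤ (108 + 36 / ε) * D ^ 2 * X := by positivity
  calc (T.card : ℝ) ≤ (108 + 36 / ε) * D ^ 2 * X := hfinal
  _ = (108 + 36 / ε) * D ^ 2 * X * 1 := by ring
  _ ≤ (108 + 36 / ε) * D ^ 2 * X * (B:ℝ) := mul_le_mul_of_nonneg_left hB1 hpos
  _ = (108 + 36 / ε) * (B:ℝ) * D ^ 2 * X := by ring
end
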